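/- The group presented on two generators t, x with defining relations t^4 = 1, x^9 = 1, (t^2 * x)^2 = 1, x⁻¹ * (t⁻¹ * x * t)⁻¹ * x * (t⁻¹ * x * t) = 1 (i.e., x commutes with t⁻¹ x t), (t * x)^8 = 1, and (t⁻¹ * x⁻¹ * t * x)^9 = 1 has cardinality 324; it is isomorphic to a semidirect product (C9 × C9) ⋊ C4. -/

import Mathlib

/-- The relations `t⁴, x⁹, (t²x)², [x, xᵗ], (tx)⁸, [t,x]⁹` on generators
`t = of 0`, `x = of 1`. -/
def rels17 : Set (FreeGroup (Fin 2)) :=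
  { (FreeGroup.of 0) ^ 4, (FreeGroup.of 1) ^ 9,
    ((FreeGroup.of 0) ^ 2 * FreeGroup.of 1) ^ 2,
    (FreeGroup.of 1)⁻¹ * ((FreeGroup.of 0)⁻¹ * FreeGroup.of 1 * FreeGroup.of 0)⁻¹ *
      FreeGroup.of 1 * ((FreeGroup.of 0)⁻¹ * FreeGroup.of 1 * FreeGroup.of 0),
    (FreeGroup.of 0 * FreeGroup.of 1) ^ 8,
    ((FreeGroup.of 0)⁻¹ * (FreeGroup.of 1)⁻¹ * FreeGroup.of 0 * FreeGroup.of 1) ^ 9 }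


namespace Stmt17

open Multiplicative
def zmodHom {G : Type*} [Group G] (n : ℕ) [NeZero n] (g : G) (h : g ^ n = 1) :
    Multiplicative (ZMod n) →* G where
  toFun z := g ^ (z.toAdd.val)
  map_one' := by simp [ZMod.val_zero]
  map_mul' a b := by
    show g ^ ((a.toAdd + b.toAdd).val) = _
    rw [ZMod.val_add, ← pow_eq_pow_mod _ h, pow_add]

lemma zmod_eq_pow {n : ℕ} [NeZero n] (z : Multiplicative (ZMod n)) :
    z = (ofAdd (1 : ZMod n)) ^ (z.toAdd.val) := by
  rw [← ofAdd_nsmul]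
  simp [nsmul_eq_mul, ZMod.natCast_val, ZMod.cast_id']

lemma zmod_hom_ext {n : ℕ} [NeZero n] {G : Type*} [Monoid G]
    {f g : Multiplicative (ZMod n) →* G}
    (h : f (ofAdd 1) = g (ofAdd 1)) : f = g := by
  apply MonoidHom.ext; intro z
  rw [show z = (ofAdd (1 : ZMod n)) ^ (z.toAdd.val) from zmod_eq_pow z, map_pow, map_pow, h]

abbrev C9 := Multiplicative (ZMod 9)
abbrev C4 := Multiplicative (ZMod 4)
abbrev N9 := C9 × C9

def σ : MulAut N9 where
  toFun p := (p.2, p.1⁻¹)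
  invFun p := (p.2⁻¹, p.1)
  left_inv p := by simp
  right_inv p := by simp
  map_mul' p q := by simp [Prod.ext_iff, mul_comm]

lemma σ4 : σ ^ 4 = 1 := by
  ext p <;> simp [σ, pow_succ, MulAut.mul_apply]

def φ : C4 →* MulAut N9 := zmodHom 4 σ σ4

lemma φ_apply (z : C4) : φ z = σ ^ (z.toAdd.val) := rfl

abbrev S := N9 ⋊[φ] C4

open SemidirectProduct

def Ffun : Fin 2 → S := ![inr (ofAdd 1), inl (ofAdd 1, 1)]

theorem hrels : ∀ r ∈ rels17, FreeGroup.lift Ffun r = 1 := by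
  intro r hr
  simp only [rels17, Set.mem_insert_iff, Set.mem_singleton_iff] at hr
  rcases hr with rfl | rfl | rfl | rfl | rfl | rfl <;>
  · simp only [map_pow, map_mul, map_inv, FreeGroup.lift_apply_of, Ffun, Matrix.cons_val_zero,
      Matrix.cons_val_one, Matrix.head_cons]
    ext <;>
      simp [pow_succ, mul_left, mul_right, φ_apply, σ, MulAut.mul_apply] <;> decide

abbrev P := PresentedGroup rels17

def fmap : P →* S := PresentedGroup.toGroup hrels

-- elements of P
def t : P := PresentedGroup.of 0
def x : P := PresentedGroup.of 1
def y : P := t⁻¹ * x * t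

lemma relP {r : FreeGroup (Fin 2)} (hr : r ∈ rels17) : PresentedGroup.mk rels17 r = 1 :=
  (QuotientGroup.eq_one_iff _).2 (Subgroup.subset_normalClosure hr)

lemma ht4 : t ^ 4 = 1 := by
  have := relP (show (FreeGroup.of 0)^4 ∈ rels17 by simp [rels17])
  simpa [map_pow, t, PresentedGroup.of] using this

lemma hx9 : x ^ 9 = 1 := by
  have := relP (show (FreeGroup.of 1)^9 ∈ rels17 by simp [rels17])
  simpa [map_pow, x, PresentedGroup.of] using this

lemma hr3 : (t^2 * x)^2 = 1 := by
  have := relP (show ((FreeGroup.of 0)^2 * FreeGroup.of 1)^2 ∈ rels17 by simp [rels17])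
  simpa [map_pow, map_mul, t, x, PresentedGroup.of] using this

lemma hcomm : Commute x y := by
  have := relP (show (FreeGroup.of 1)⁻¹ * ((FreeGroup.of 0)⁻¹ * FreeGroup.of 1 * FreeGroup.of 0)⁻¹ *
      FreeGroup.of 1 * ((FreeGroup.of 0)⁻¹ * FreeGroup.of 1 * FreeGroup.of 0) ∈ rels17 by
    simp [rels17])
  simp only [map_mul, map_inv] at this
  have h : (y * x)⁻¹ * (x * y) = 1 := by
    rw [mul_inv_rev]
    simpa [y, t, x, mul_assoc, PresentedGroup.of] using this
  exact (inv_mul_eq_one.mp h).symm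

lemma hy9 : y ^ 9 = 1 := by
  have : y = t⁻¹ * x * (t⁻¹)⁻¹ := by rw [inv_inv]; rfl
  rw [this, conj_pow, hx9]; group

lemma hconj : t * x * t⁻¹ = y⁻¹ := by
  have hA : (t^2 * x) * (t^2 * x) = 1 := by rw [← sq]; exact hr3
  have h2 : t^2 * x * t^2 = x⁻¹ := by
    have e : t^2 * x * t^2 = (t^2*x) * (t^2*x) * x⁻¹ := by group
    rw [e, hA, one_mul]
  have hinv2 : t⁻¹ * t⁻¹ = t^2 := by
    have e : t⁻¹ * t⁻¹ = t^2 * (t^4)⁻¹ := by group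
    rw [e, ht4, inv_one, mul_one]
  have key : t⁻¹ * y * t = x⁻¹ := by
    have e : t⁻¹ * y * t = (t⁻¹ * t⁻¹) * x * (t * t) := by simp [y, mul_assoc]
    rw [e, hinv2, show t * t = t^2 by rw [sq]]
    exact h2
  have : y = t * x⁻¹ * t⁻¹ := by rw [← key]; group
  rw [this]; group

def fH : C4 →* P := zmodHom 4 t ht4

def fN : N9 →* P :=
  (zmodHom 9 x hx9).noncommCoprod (zmodHom 9 y hy9)
    (fun m n => (hcomm.pow_pow _ _))

lemma fN_a : fN (ofAdd 1, 1) = x := by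
  show x ^ (1 : ZMod 9).val * y ^ (0 : ZMod 9).val = x
  rw [show (1 : ZMod 9).val = 1 by decide, show (0 : ZMod 9).val = 0 by decide]
  group

lemma fN_b : fN (1, ofAdd 1) = y := by
  show x ^ (0 : ZMod 9).val * y ^ (1 : ZMod 9).val = y
  rw [show (1 : ZMod 9).val = 1 by decide, show (0 : ZMod 9).val = 0 by decide]
  group

lemma fH_τ : fH (ofAdd 1) = t := by
  show t ^ (1 : ZMod 4).val = t
  rw [show (1 : ZMod 4).val = 1 by decide, pow_one]

-- hom ext on N9
lemma n9_hom_ext {G : Type*} [Monoid G] {f g : N9 →* G}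
    (h1 : f (ofAdd 1, 1) = g (ofAdd 1, 1)) (h2 : f (1, ofAdd 1) = g (1, ofAdd 1)) : f = g := by
  have l : f.comp (MonoidHom.inl C9 C9) = g.comp (MonoidHom.inl C9 C9) := by
    apply zmod_hom_ext; simpa using h1
  have r : f.comp (MonoidHom.inr C9 C9) = g.comp (MonoidHom.inr C9 C9) := by
    apply zmod_hom_ext; simpa using h2
  ext ⟨u, v⟩
  have hu := DFunLike.congr_fun l u
  have hv := DFunLike.congr_fun r v
  simp only [MonoidHom.comp_apply, MonoidHom.inl_apply, MonoidHom.inr_apply] at hu hv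
  have : (u, v) = ((u, 1) : N9) * (1, v) := by simp
  rw [this, map_mul, map_mul, hu, hv]

lemma compat1 : ∀ n : N9, fN (σ n) = t * fN n * t⁻¹ := by
  have : fN.comp σ.toMonoidHom = (MulAut.conj t).toMonoidHom.comp fN := by
    apply n9_hom_ext
    · show fN (σ (ofAdd 1, 1)) = t * fN (ofAdd 1, 1) * t⁻¹
      have : σ ((ofAdd 1, 1) : N9) = ((1, ofAdd 1) : N9)⁻¹ := by decide
      rw [this, map_inv, fN_b, fN_a, hconj]
    · show fN (σ (1, ofAdd 1)) = t * fN (1, ofAdd 1) * t⁻¹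
      have : σ ((1, ofAdd 1) : N9) = ((ofAdd 1, 1) : N9) := by decide
      rw [this, fN_a, fN_b]
      simp [y, mul_assoc]
  intro n
  simpa using DFunLike.congr_fun this n

lemma compat : ∀ g : C4, fN.comp (φ g).toMonoidHom =
    (MulAut.conj (fH g)).toMonoidHom.comp fN := by
  have key : ∀ (k : ℕ) (n : N9), fN ((σ ^ k) n) = t ^ k * fN n * (t ^ k)⁻¹ := by
    intro k
    induction k with
    | zero => simp
    | succ k ih =>
      intro n
      rw [pow_succ, MulAut.mul_apply, ih, compat1, pow_succ]
      group
  intro g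
  ext n
  simp only [MonoidHom.comp_apply, MulEquiv.coe_toMonoidHom, MulAut.conj_apply]
  rw [φ_apply, key, show fH g = t ^ (g.toAdd.val) from rfl]

def gmap : S →* P := SemidirectProduct.lift fN fH compat

lemma fmap_t : fmap t = inr (ofAdd 1) := by
  show fmap (PresentedGroup.of 0) = _
  rw [fmap, PresentedGroup.toGroup.of]
  rfl

lemma fmap_x : fmap x = inl (ofAdd 1, 1) := by
  show fmap (PresentedGroup.of 1) = _
  rw [fmap, PresentedGroup.toGroup.of]
  rfl

lemma gf : gmap.comp fmap = MonoidHom.id P := by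
  apply PresentedGroup.ext
  intro i
  fin_cases i
  · show gmap (fmap t) = t
    rw [fmap_t]
    rw [gmap, SemidirectProduct.lift_inr]
    exact fH_τ
  · show gmap (fmap x) = x
    rw [fmap_x]
    rw [gmap, SemidirectProduct.lift_inl]
    exact fN_a

lemma fg : fmap.comp gmap = MonoidHom.id S := by
  apply SemidirectProduct.hom_ext
  · apply n9_hom_ext
    · show fmap (gmap (inl (ofAdd 1, 1))) = inl (ofAdd 1, 1)
      rw [gmap, SemidirectProduct.lift_inl, fN_a, fmap_x]
    · show fmap (gmap (inl (1, ofAdd 1))) = inl (1, ofAdd 1)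
      rw [gmap, SemidirectProduct.lift_inl, fN_b]
      show fmap (t⁻¹ * x * t) = _
      rw [map_mul, map_mul, map_inv, fmap_t, fmap_x]
      rw [← map_inv, ← SemidirectProduct.inl_aut_inv]
      exact congrArg SemidirectProduct.inl (by decide)
  · apply zmod_hom_ext
    show fmap (gmap (inr (ofAdd 1))) = inr (ofAdd 1)
    rw [gmap, SemidirectProduct.lift_inr, fH_τ, fmap_t]

def theEquiv : P ≃* S := MonoidHom.toMulEquiv fmap gmap gf fg

def sEquivProd : S ≃ N9 × C4 where
  toFun s := (s.left, s.right)
  invFun p := ⟨p.1, p.2⟩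
  left_inv s := rfl
  right_inv p := rfl

lemma cardS : Nat.card S = 324 := by
  rw [Nat.card_congr sEquivProd, Nat.card_prod, Nat.card_prod,
    Nat.card_congr (Multiplicative.toAdd (α := ZMod 9)), Nat.card_congr (Multiplicative.toAdd (α := ZMod 4)),
    Nat.card_zmod, Nat.card_zmod]


end Stmt17

/-- The group `⟨t, x ∣ t⁴, x⁹, (t²x)², [x, xᵗ], (tx)⁸, [t,x]⁹⟩` has order 324 and is a
semidirect product `(C₉ × C₉) ⋊ C₄`. -/
theorem statement_17 :
    Nat.card (PresentedGroup rels17) = 324 ∧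
    ∃ φ : Multiplicative (ZMod 4) →*
        MulAut (Multiplicative (ZMod 9) × Multiplicative (ZMod 9)),
      Nonempty (PresentedGroup rels17 ≃*
        (Multiplicative (ZMod 9) × Multiplicative (ZMod 9)) ⋊[φ] Multiplicative (ZMod 4)) := by
  refine ⟨?_, Stmt17.φ, ⟨Stmt17.theEquiv⟩⟩
  rw [Nat.card_congr Stmt17.theEquiv.toEquiv]
  exact Stmt17.cardS
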